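/- Let n and k be positive integers with n > 1, k ≥ 3 and (n,k) ≠ (2,6). Then n^k − 1 has a primitive prime divisor, i.e., a prime t dividing n^k − 1 such that t does not divide n^i − 1 for any 1 ≤ i ≤ k−1. -/

import Mathlib

open Polynomial Finset
namespace ZsigAux

lemma cyc_dvd_geom (k m q : ℕ) (hk : k = m * q) (hmk : m < k) (x : ℤ) (hx : 1 < x) :
    (cyclotomic k ℤ).eval x ∣ ∑ j ∈ range q, (x ^ m) ^ j := by
  have hm : m ∈ k.properDivisors := Nat.mem_properDivisors.mpr ⟨⟨q, hk⟩, hmk⟩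
  have h0m : 0 < m := Nat.pos_of_mem_properDivisors hm
  have hpoly := X_pow_sub_one_mul_cyclotomic_dvd_X_pow_sub_one_of_dvd ℤ hm
  have heval : (x ^ m - 1) * (cyclotomic k ℤ).eval x ∣ x ^ k - 1 := by
    simpa using eval_dvd (x := x) hpoly
  have hgeom : x ^ k - 1 = (x ^ m - 1) * ∑ j ∈ range q, (x ^ m) ^ j := by
    rw [hk, pow_mul, mul_comm (x ^ m - 1), geom_sum_mul]
  rw [hgeom] at heval
  have hne : x ^ m - 1 ≠ 0 := by
    have : 1 < x ^ m := one_lt_pow₀ hx h0m.ne'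
    omega
  exact (mul_dvd_mul_iff_left hne).mp heval

lemma pow_sub_one_dvd (y w : ℤ) (h : y = 1 + w) (q : ℕ) :
    w ^ 2 ∣ y ^ q - 1 - q * w := by
  induction q with
  | zero => simp
  | succ q ih =>
    obtain ⟨z, hz⟩ := ih
    refine ⟨y * z + q, ?_⟩
    push_cast
    linear_combination y * hz + (1 + (q : ℤ) * w) * h

lemma geom_sum_mod (y w : ℤ) (h : y = 1 + w) (q : ℕ) :
    w ^ 2 ∣ 2 * (∑ j ∈ range q, y ^ j) - (2 * q + w * q * (q - 1)) := by
  induction q with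
  | zero => simp
  | succ q ih =>
    obtain ⟨z1, hz1⟩ := ih
    obtain ⟨z2, hz2⟩ := pow_sub_one_dvd y w h q
    refine ⟨z1 + 2 * z2, ?_⟩
    rw [Finset.sum_range_succ]
    push_cast
    linear_combination hz1 + 2 * hz2

lemma nat_dvd_int (t m : ℕ) (hm : 1 ≤ m) : (t:ℤ) ∣ (m:ℤ) - 1 ↔ t ∣ m - 1 := by
  rw [← Int.natCast_dvd_natCast, Nat.cast_sub hm, Nat.cast_one]

lemma dvd_iff_pow (t : ℕ) [NeZero t] (n j : ℕ) (hn : 1 ≤ n) :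
    t ∣ n ^ j - 1 ↔ ((n : ZMod t)) ^ j = 1 := by
  have h1 : (1:ℕ) ≤ n ^ j := Nat.one_le_pow _ _ (by omega)
  rw [← ZMod.natCast_eq_zero_iff, Nat.cast_sub h1]
  push_cast
  rw [sub_eq_zero, eq_comm]

lemma structure_lemma (n k t : ℕ) (hn : 1 < n) (hk : 3 ≤ k) (ht : t.Prime)
    (htc : (t:ℤ) ∣ (cyclotomic k ℤ).eval (n:ℤ))
    (i : ℕ) (hi1 : 1 ≤ i) (hik : i ≤ k - 1) (hti : t ∣ n ^ i - 1) :
    ∃ d a : ℕ, 0 < d ∧ d ∣ t - 1 ∧ 1 ≤ a ∧ k = d * t ^ a ∧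
      ¬ ((t:ℤ)^2 ∣ (cyclotomic k ℤ).eval (n:ℤ)) := by
  haveI : Fact t.Prime := ⟨ht⟩
  have ht2 : 2 ≤ t := ht.two_le
  have hk0 : 0 < k := by omega
  have hcdvd : (cyclotomic k ℤ).eval (n:ℤ) ∣ (n:ℤ)^k - 1 := by
    simpa using eval_dvd (x := (n:ℤ)) (cyclotomic.dvd_X_pow_sub_one k ℤ)
  have hn1 : 1 ≤ n := by omega
  have htk : t ∣ n ^ k - 1 := by
    have h1 : (1:ℕ) ≤ n ^ k := Nat.one_le_pow _ _ (by omega)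
    rw [← nat_dvd_int _ _ h1]
    push_cast
    exact htc.trans hcdvd
  set u : ZMod t := (n : ZMod t) with hu
  have hu_pow_k : u ^ k = 1 := (dvd_iff_pow t n k hn1).mp htk
  have hu_pow_i : u ^ i = 1 := (dvd_iff_pow t n i hn1).mp hti
  have hu0 : u ≠ 0 := by
    intro h
    rw [h, zero_pow (by omega)] at hu_pow_i
    exact zero_ne_one hu_pow_i
  set d : ℕ := orderOf u with hd
  have hdk : d ∣ k := orderOf_dvd_of_pow_eq_one hu_pow_k
  have hdi : d ∣ i := orderOf_dvd_of_pow_eq_one hu_pow_i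
  have hdt1 : d ∣ t - 1 :=
    orderOf_dvd_of_pow_eq_one (ZMod.pow_card_sub_one_eq_one hu0)
  have hd0 : 0 < d := by
    rcases Nat.eq_zero_or_pos d with h | h
    · rw [h] at hdt1
      omega
    · exact h
  have hdlt : d < k := lt_of_le_of_lt (Nat.le_of_dvd (by omega) hdi) (by omega)
  -- t divides n^m - 1 whenever d ∣ m
  have hpow_of_dvd : ∀ m : ℕ, d ∣ m → t ∣ n ^ m - 1 := by
    intro m hm
    rw [dvd_iff_pow t n m hn1]
    exact orderOf_dvd_iff_pow_eq_one.mp hm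
  -- every prime dividing k / d equals t
  have hq_eq : ∀ q : ℕ, q.Prime → q ∣ k / d → q = t := by
    intro q hq hqkd
    obtain ⟨r, hr⟩ := hqkd
    have hkdr : k = (d * r) * q := by
      have := Nat.div_mul_cancel hdk
      calc k = k / d * d := this.symm ▸ (Nat.div_mul_cancel hdk).symm
        _ = (q * r) * d := by rw [hr]
        _ = (d * r) * q := by ring
    set m := d * r with hm
    have hm0 : 0 < m := by
      rcases Nat.eq_zero_or_pos m with h | h
      · rw [h] at hkdr; omega
      · exact h
    have hmk : m < k := by
      have hq2 := hq.two_le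
      nlinarith
    have hsum : (t:ℤ) ∣ ∑ j ∈ range q, ((n:ℤ) ^ m) ^ j :=
      htc.trans (cyc_dvd_geom k m q hkdr hmk (n:ℤ) (by exact_mod_cast hn))
    have hym : u ^ m = 1 := orderOf_dvd_iff_pow_eq_one.mp ⟨r, rfl⟩
    have hcast : ((∑ j ∈ range q, ((n:ℤ) ^ m) ^ j : ℤ) : ZMod t) = (q : ZMod t) := by
      push_cast
      rw [← hu]
      calc ∑ j ∈ range q, (u ^ m) ^ j = ∑ j ∈ range q, 1 := by
            refine Finset.sum_congr rfl fun j _ => by rw [hym, one_pow]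
        _ = (q : ZMod t) := by simp
    have h0 : ((∑ j ∈ range q, ((n:ℤ) ^ m) ^ j : ℤ) : ZMod t) = 0 :=
      (ZMod.intCast_zmod_eq_zero_iff_dvd _ t).mpr (by exact_mod_cast hsum)
    have : (q : ZMod t) = 0 := by rw [← hcast]; exact h0
    have htq : t ∣ q := (ZMod.natCast_eq_zero_iff q t).mp this
    exact ((Nat.prime_dvd_prime_iff_eq ht hq).mp htq).symm
  -- k / d is a power of t
  have hkd0 : k / d ≠ 0 := by
    have := Nat.div_pos (Nat.le_of_dvd (by omega) hdk) hd0
    omega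
  have hkd_pow := Nat.eq_prime_pow_of_unique_prime_dvd hkd0
    (fun {q} hq hqd => hq_eq q hq hqd)
  set a := (k / d).primeFactorsList.length with ha
  have hkda : k = d * t ^ a := by
    rw [← hkd_pow]
    exact (Nat.div_mul_cancel hdk).symm.trans (mul_comm _ _)
  have hkd2 : 2 ≤ k / d := by
    have h1 : k / d ∣ k := Nat.div_dvd_of_dvd hdk
    have : k / d ≠ 1 := by
      intro h
      have := Nat.eq_mul_of_div_eq_right hdk h
      omega
    rcases Nat.lt_or_ge (k/d) 2 with h | h
    · interval_cases (k/d) <;> omega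
    · exact h
  have ha1 : 1 ≤ a := by
    by_contra h
    push_neg at h
    interval_cases a
    · rw [hkd_pow, pow_zero] at hkd2; omega
  refine ⟨d, a, hd0, hdt1, ha1, hkda, ?_⟩
  -- now: t^2 does not divide the cyclotomic value
  intro hsq
  have hmt : k = (d * t ^ (a-1)) * t := by
    rw [hkda]
    have : t ^ a = t ^ (a - 1) * t := by
      conv_lhs => rw [show a = (a-1) + 1 by omega]
      ring
    rw [this]; ring
  set m := d * t ^ (a - 1) with hmdef
  have hm0 : 0 < m := Nat.mul_pos hd0 (pow_pos (by omega) _)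
  have hmk : m < k := by
    rw [hmt]
    exact (Nat.lt_mul_iff_one_lt_right hm0).mpr (by omega)
  have hsum : ((t:ℤ))^2 ∣ ∑ j ∈ range t, ((n:ℤ) ^ m) ^ j :=
    hsq.trans (cyc_dvd_geom k m t hmt hmk (n:ℤ) (by exact_mod_cast hn))
  have hdm : d ∣ m := ⟨t ^ (a-1), rfl⟩
  have htw : t ∣ n ^ m - 1 := hpow_of_dvd m hdm
  have h1m : (1:ℕ) ≤ n ^ m := Nat.one_le_pow _ _ (by omega)
  have htwz : (t:ℤ) ∣ (n:ℤ) ^ m - 1 := by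
    rw [show ((n:ℤ))^m = ((n^m : ℕ) : ℤ) by push_cast; ring, nat_dvd_int _ _ h1m]
    exact htw
  rcases Nat.Prime.eq_two_or_odd' ht with ht_two | ht_odd
  · -- t = 2 : then d = 1, k = 2^a with a ≥ 2, m = 2^(a-1) is even
    subst ht_two
    have hd1 : d = 1 := Nat.dvd_one.mp (by simpa using hdt1)
    have ha2 : 2 ≤ a := by
      by_contra h
      push_neg at h
      interval_cases a <;> omega
    have hmeven : m = 2 * (2 ^ (a - 2)) := by
      rw [hmdef, hd1, one_mul]
      rw [show a - 1 = 1 + (a - 2) by omega, pow_add, pow_one]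
    set z := n ^ (2 ^ (a - 2)) with hz
    have hyz : (n:ℤ) ^ m = ((z^2 : ℕ) : ℤ) := by
      push_cast
      rw [hz, hmeven]
      push_cast
      ring
    have hsum2 : (∑ j ∈ range 2, ((n:ℤ) ^ m) ^ j) = ((1 + z^2 : ℕ) : ℤ) := by
      rw [Finset.sum_range_succ, Finset.sum_range_one, hyz]
      push_cast
      ring
    rw [hsum2] at hsum
    have h4 : (4:ℕ) ∣ 1 + z^2 := by
      have : ((4:ℕ):ℤ) ∣ ((1 + z^2 : ℕ):ℤ) := by exact_mod_cast hsum
      exact_mod_cast this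
    -- z is odd
    have hnodd : ¬ (2 ∣ n) := by
      intro h2n
      apply hu0
      rw [hu]
      exact (ZMod.natCast_eq_zero_iff n 2).mpr h2n
    have hzodd : ¬ 2 ∣ z := by
      intro h2z
      rw [hz] at h2z
      exact hnodd (Nat.Prime.dvd_of_dvd_pow Nat.prime_two h2z)
    obtain ⟨b, hb⟩ : ∃ b, z = 2*b + 1 := ⟨z/2, by omega⟩
    rw [hb] at h4
    have : 1 + (2*b+1)^2 = 4*(b*b+b) + 2 := by ring
    omega
  · -- t odd
    obtain ⟨w, hwdef⟩ := htwz
    have hy : (n:ℤ)^m = 1 + t * w := by linarith [hwdef]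
    have hmod := geom_sum_mod ((n:ℤ)^m) ((t:ℤ)*w) (by linarith) t
    obtain ⟨z1, hz1⟩ := hmod
    obtain ⟨z2, hz2⟩ := hsum
    -- 2Σ = 2t + t w t (t-1) + (tw)^2 z1 ; t^2 ∣ Σ
    have ht3 : 3 ≤ t := by
      rcases ht_odd with ⟨c, hc⟩
      omega
    have hdvd2t : ((t:ℤ))^2 ∣ 2 * (t : ℤ) := by
      have e1 : 2 * ((t:ℤ)) = 2 * (∑ j ∈ range t, ((n:ℤ)^m)^j)
          - ((t:ℤ)*w) * t * ((t:ℤ) - 1) - ((t:ℤ)*w)^2 * z1 := by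
        linear_combination -hz1
      rw [e1, hz2]
      have d1 : ((t:ℤ))^2 ∣ 2 * ((t:ℤ)^2 * z2) := ⟨2 * z2, by ring⟩
      have d2 : ((t:ℤ))^2 ∣ ((t:ℤ)*w) * t * ((t:ℤ) - 1) := ⟨w * ((t:ℤ)-1), by ring⟩
      have d3 : ((t:ℤ))^2 ∣ ((t:ℤ)*w)^2 * z1 := ⟨w^2 * z1, by ring⟩
      exact dvd_sub (dvd_sub d1 d2) d3
    have : (t:ℤ)^2 ≤ 2 * t := by
      apply Int.le_of_dvd (by positivity) hdvd2t
    have : (t:ℕ)^2 ≤ 2 * t := by exact_mod_cast this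
    nlinarith

/-- iterated expand: `Φ_{b t^j}(x) = Φ_b(x^{t^j})` when `t ∣ b`. -/
lemma cyc_eval_pow (t : ℕ) (ht : t.Prime) (b : ℕ) (htb : t ∣ b) (j : ℕ) (x : ℤ) :
    (cyclotomic (b * t ^ j) ℤ).eval x = (cyclotomic b ℤ).eval (x ^ t ^ j) := by
  induction j generalizing x with
  | zero => simp
  | succ j ih =>
    have h1 : b * t ^ (j + 1) = b * t ^ j * t := by ring
    have h2 : t ∣ b * t ^ j := htb.mul_right _
    rw [h1, ← cyclotomic_expand_eq_cyclotomic ht h2, expand_eval, ih, ← pow_mul,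
      ← pow_succ']

lemma key_ineq (N t : ℕ) (hN : 2 ≤ N) (ht : 3 ≤ t) (h : ¬(N = 2 ∧ t = 3)) :
    t * (N + 1) + 1 ≤ N ^ t := by
  rcases eq_or_lt_of_le hN with h2 | h3
  · -- N = 2, t ≥ 4
    have ht4 : 4 ≤ t := by
      rcases Nat.lt_or_ge t 4 with h' | h'
      · interval_cases t
        · exact absurd ⟨h2.symm, rfl⟩ h
      · exact h'
    subst h2
    clear h ht
    induction t, ht4 using Nat.le_induction with
    | base => norm_num
    | succ t ht ih =>
      have : (2:ℕ)^(t+1) = 2 * 2^t := by ring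
      omega
  · -- N ≥ 3
    clear h hN
    have hN3 : 3 ≤ N := h3
    induction t, ht using Nat.le_induction with
    | base =>
      have e1 : 9 ≤ N * N := by nlinarith
      have e2 : 9 * N ≤ N * N * N := Nat.mul_le_mul_right N e1
      have e3 : N^3 = N * N * N := by ring
      linarith
    | succ t ht ih =>
      have h5 : (t*(N+1)+1) * N ≤ N^t * N := Nat.mul_le_mul_right N ih
      have h6 : N^(t+1) = N^t * N := by ring
      have e1 : t * 9 ≤ t * (N * N) := Nat.mul_le_mul_left t (Nat.mul_le_mul hN3 hN3)
      nlinarith [h5, h6, e1, ht]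

lemma size_contradiction_d1 (N t : ℕ) (hN : 2 ≤ N) (ht : 2 ≤ t)
    (heq : (cyclotomic t ℤ).eval (N:ℤ) = (t:ℤ)) (htp : t.Prime) : False := by
  haveI : Fact t.Prime := ⟨htp⟩
  rw [cyclotomic_prime] at heq
  have heval : (t:ℤ) = ∑ i ∈ range t, (N:ℤ)^i := by
    rw [← heq]
    simp [eval_finset_sum]
  have h1 : ∀ i ∈ range t, ((i:ℤ) + 1) ≤ (N:ℤ)^i := by
    intro i _
    calc ((i:ℤ) + 1) ≤ (2:ℤ)^i := by exact_mod_cast Nat.lt_two_pow_self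
      _ ≤ (N:ℤ)^i := pow_le_pow_left₀ (by norm_num) (by exact_mod_cast hN) i
  have h2 := Finset.sum_le_sum h1
  have h3 : (∑ i ∈ range t, ((i:ℤ) + 1)) =
      ((∑ i ∈ range t, i : ℕ) : ℤ) + t := by
    rw [Finset.sum_add_distrib]
    push_cast
    simp
  have h4 : 1 ≤ ∑ i ∈ range t, i := by
    have hg := Finset.sum_range_id_mul_two t
    have h6 : 2 * 1 ≤ t * (t - 1) := Nat.mul_le_mul ht (by omega)
    rw [← hg] at h6
    omega
  rw [h3] at h2
  rw [← heval] at h2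
  have h5 : (1:ℤ) ≤ ((∑ i ∈ range t, i : ℕ) : ℤ) := by exact_mod_cast h4
  linarith

lemma size_contradiction_d2 (N t d : ℕ) (hN : 2 ≤ N) (ht : t.Prime) (hd : 2 ≤ d)
    (htd : ¬ t ∣ d) (ht3 : 3 ≤ t) (hex : ¬(N = 2 ∧ t = 3))
    (heq : (cyclotomic (d * t) ℤ).eval (N:ℤ) = (t:ℤ)) : False := by
  set B : ℤ := (cyclotomic d ℤ).eval (N:ℤ) with hB
  have hid : (cyclotomic d ℤ).eval ((N:ℤ)^t) = (t:ℤ) * B := by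
    have h0 := cyclotomic_expand_eq_cyclotomic_mul (R := ℤ) ht htd
    have h2 := congrArg (eval (N:ℤ)) h0
    rw [expand_eval, eval_mul, heq] at h2
    exact h2
  -- real casts
  have hcast : ∀ (v : ℤ), (cyclotomic d ℝ).eval ((v:ℝ)) =
      (((cyclotomic d ℤ).eval v : ℤ) : ℝ) := by
    intro v
    rw [← map_cyclotomic_int d ℝ, eval_intCast_map]
    simp
  have e := Nat.totient_pos.mpr (show 0 < d by omega)
  set φd := Nat.totient d with hphi
  have hNR : (1:ℝ) < (N:ℝ) := by exact_mod_cast hN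
  have hNtR : (1:ℝ) < (N:ℝ)^t := one_lt_pow₀ hNR (by omega)
  have hlow : ((N:ℝ)^t - 1)^φd < (cyclotomic d ℝ).eval ((N:ℝ)^t) :=
    sub_one_pow_totient_lt_cyclotomic_eval hd hNtR
  have hupp : (cyclotomic d ℝ).eval ((N:ℝ)) ≤ ((N:ℝ) + 1)^φd :=
    cyclotomic_eval_le_add_one_pow_totient hNR d
  have hevalNt : (cyclotomic d ℝ).eval ((N:ℝ)^t) = ((t:ℝ)) * (B:ℝ) := by
    have : ((N:ℝ)^t) = (((N:ℤ)^t : ℤ) : ℝ) := by push_cast; ring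
    rw [this, hcast ((N:ℤ)^t), hid]
    push_cast
    ring
  have hevalN : (cyclotomic d ℝ).eval ((N:ℝ)) = (B:ℝ) := by
    have : ((N:ℝ)) = (((N:ℤ) : ℤ) : ℝ) := by push_cast; ring
    rw [this, hcast (N:ℤ)]
  -- real chain
  have hreal : ((N:ℝ)^t - 1)^φd < (t:ℝ) * ((N:ℝ) + 1)^φd := by
    calc ((N:ℝ)^t - 1)^φd < (cyclotomic d ℝ).eval ((N:ℝ)^t) := hlow
      _ = (t:ℝ) * (B:ℝ) := hevalNt
      _ ≤ (t:ℝ) * ((N:ℝ) + 1)^φd := by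
          apply mul_le_mul_of_nonneg_left _ (by positivity)
          rw [← hevalN]; exact hupp
  -- nat chain
  have hkey := key_ineq N t hN ht3 hex
  have hNt1 : t * (N + 1) ≤ N^t - 1 := by omega
  have hN1le : N + 1 ≤ N^t - 1 := by
    have : 3 * (N+1) ≤ t * (N+1) := Nat.mul_le_mul_right _ ht3
    omega
  have hnat : t * (N + 1)^φd ≤ (N^t - 1)^φd := by
    obtain ⟨e', he'⟩ : ∃ e', φd = e' + 1 := ⟨φd - 1, by omega⟩
    rw [he', pow_succ, pow_succ]
    calc t * ((N+1)^e' * (N+1)) = (N+1)^e' * (t * (N+1)) := by ring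
      _ ≤ (N^t - 1)^e' * (N^t - 1) :=
          Nat.mul_le_mul (Nat.pow_le_pow_left hN1le e') hNt1
  -- combine
  have hc1 : ((N^t - 1 : ℕ) : ℝ) = (N:ℝ)^t - 1 := by
    have h1 : (1:ℕ) ≤ N^t := Nat.one_le_pow _ _ (by omega)
    push_cast [Nat.cast_sub h1]
    ring
  have hcontr : (t:ℝ) * ((N:ℝ) + 1)^φd ≤ ((N:ℝ)^t - 1)^φd := by
    rw [← hc1]
    calc (t:ℝ) * ((N:ℝ)+1)^φd = ((t * (N+1)^φd : ℕ) : ℝ) := by push_cast; ring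
      _ ≤ (((N^t - 1)^φd : ℕ) : ℝ) := by exact_mod_cast hnat
      _ = ((N^t - 1 : ℕ) : ℝ)^φd := by push_cast; ring
  linarith

end ZsigAux

open ZsigAux in
/-- Zsigmondy's theorem: for `n > 1`, `k ≥ 3`, `(n,k) ≠ (2,6)`, the number `n^k - 1`
has a primitive prime divisor, i.e. a prime `t ∣ n^k - 1` with `t ∤ n^i - 1` for
all `1 ≤ i ≤ k - 1`. -/
theorem stmt1 (n k : ℕ) (hn : 1 < n) (hk : 3 ≤ k) (hnk : ¬(n = 2 ∧ k = 6)) :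
    ∃ t : ℕ, t.Prime ∧ t ∣ n ^ k - 1 ∧ ∀ i : ℕ, 1 ≤ i → i ≤ k - 1 → ¬ t ∣ n ^ i - 1 := by
  by_contra hcon
  push_neg at hcon
  set cZ := (cyclotomic k ℤ).eval (n:ℤ) with hcZ
  have hk0 : 0 < k := by omega
  have hnZ : (1:ℤ) < (n:ℤ) := by exact_mod_cast hn
  have hcpos : 0 < cZ := cyclotomic_pos' k hnZ
  set c := cZ.toNat with hc
  have hcZc : (c:ℤ) = cZ := Int.toNat_of_nonneg hcpos.le
  have hcdvdZ : cZ ∣ (n:ℤ)^k - 1 := by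
    simpa using eval_dvd (x := (n:ℤ)) (cyclotomic.dvd_X_pow_sub_one k ℤ)
  have h1nk : (1:ℕ) ≤ n ^ k := Nat.one_le_pow _ _ (by omega)
  have hcdvd : c ∣ n ^ k - 1 := by
    rw [← nat_dvd_int c (n^k) h1nk]
    push_cast
    rw [hcZc]
    exact hcdvdZ
  have hc1 : 1 < c := by
    have h := sub_one_lt_natAbs_cyclotomic_eval (n := k) (q := n) (by omega) (by omega)
    have habs : cZ.natAbs = c := by omega
    omega
  have hstruct : ∀ s : ℕ, s.Prime → s ∣ c →
      ∃ d a, 0 < d ∧ d ∣ s - 1 ∧ 1 ≤ a ∧ k = d * s ^ a ∧ ¬((s:ℤ)^2 ∣ cZ) := by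
    intro s hs hsc
    have hsZ : (s:ℤ) ∣ cZ := by
      rw [← hcZc]
      exact_mod_cast hsc
    obtain ⟨i, hi1, hik, hti⟩ := hcon s hs (hsc.trans hcdvd)
    exact structure_lemma n k s hn hk hs hsZ i hi1 hik hti
  set t := c.minFac with htdef
  have ht : t.Prime := Nat.minFac_prime (by omega)
  have htc : t ∣ c := Nat.minFac_dvd c
  obtain ⟨d, a, hd0, hdt1, ha1, hka, hnsq⟩ := hstruct t ht htc
  have ht2 : 2 ≤ t := ht.two_le
  have hdle : d ≤ t - 1 := Nat.le_of_dvd (by omega) hdt1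
  have hall : ∀ s, s.Prime → s ∣ c → s = t := by
    intro s hs hsc
    obtain ⟨d', a', hd0', hdt1', ha1', hka', _⟩ := hstruct s hs hsc
    by_contra hne
    have hs2 : 2 ≤ s := hs.two_le
    have hd'le : d' ≤ s - 1 := Nat.le_of_dvd (by omega) hdt1'
    have hsk : s ∣ k := by
      rw [hka']
      exact Dvd.dvd.mul_left (dvd_pow_self s (by omega)) d'
    have htk : t ∣ k := by
      rw [hka]
      exact Dvd.dvd.mul_left (dvd_pow_self t (by omega)) d
    have hsd : s ∣ d := by
      rw [hka] at hsk
      rcases (Nat.Prime.dvd_mul hs).mp hsk with h | h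
      · exact h
      · exact absurd ((Nat.prime_dvd_prime_iff_eq hs ht).mp (hs.dvd_of_dvd_pow h)) hne
    have htd' : t ∣ d' := by
      rw [hka'] at htk
      rcases (Nat.Prime.dvd_mul ht).mp htk with h | h
      · exact h
      · exact absurd ((Nat.prime_dvd_prime_iff_eq ht hs).mp (ht.dvd_of_dvd_pow h)).symm hne
    have h1 : s ≤ d := Nat.le_of_dvd hd0 hsd
    have h2 : t ≤ d' := Nat.le_of_dvd hd0' htd'
    omega
  have hct : c = t := by
    obtain ⟨c', hc'⟩ := htc
    by_contra hne
    have hc'1 : c' ≠ 1 := fun h => hne (by rw [hc', h, mul_one])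
    obtain ⟨s, hs, hsdvd⟩ := Nat.exists_prime_and_dvd hc'1
    have hsc : s ∣ c := hc' ▸ Dvd.dvd.mul_left hsdvd t
    have hst : s = t := hall s hs hsc
    apply hnsq
    rw [← hcZc]
    have htt : t * t ∣ c := by
      rw [hc']
      exact mul_dvd_mul_left t (hst ▸ hsdvd)
    have : ((t * t : ℕ) : ℤ) ∣ (c:ℤ) := Int.natCast_dvd_natCast.mpr htt
    rw [sq]
    exact_mod_cast this
  have hcZt : cZ = (t:ℤ) := by rw [← hcZc, hct]
  set N := n ^ t ^ (a - 1) with hNdef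
  have hN2 : 2 ≤ N := le_trans hn (Nat.le_self_pow (pow_ne_zero _ (by omega)) n)
  have hkey : (cyclotomic (d * t) ℤ).eval ((N:ℤ)) = (t:ℤ) := by
    have hexp := cyc_eval_pow t ht (d * t) (dvd_mul_left t d) (a - 1) (n:ℤ)
    have hk_eq : d * t * t ^ (a - 1) = k := by
      have h : t ^ a = t * t ^ (a - 1) := by
        conv_lhs => rw [show a = 1 + (a - 1) by omega]
        rw [pow_add, pow_one]
      rw [hka, h, mul_assoc]
    rw [hk_eq] at hexp
    have hNcast : ((N:ℤ)) = (n:ℤ) ^ t ^ (a - 1) := by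
      rw [hNdef]
      push_cast
      ring
    rw [hNcast, ← hexp, ← hcZ, hcZt]
  rcases eq_or_lt_of_le (Nat.succ_le_of_lt hd0) with hd1 | hd2
  · -- d = 1
    have hd1' : d = 1 := hd1.symm
    exact size_contradiction_d1 N t hN2 ht2 (by rw [← hkey, hd1', one_mul]) ht
  · -- d ≥ 2
    have hd2' : 2 ≤ d := hd2
    have ht3 : 3 ≤ t := by omega
    have htd : ¬ t ∣ d := fun h => by
      have := Nat.le_of_dvd hd0 h
      omega
    have hex : ¬(N = 2 ∧ t = 3) := by
      rintro ⟨hN2', ht3'⟩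
      -- N = n ^ (t^(a-1)) = 2 forces n = 2 and t^(a-1) = 1
      have he0 : t ^ (a - 1) ≠ 0 := pow_ne_zero _ (by omega)
      have he1 : t ^ (a - 1) = 1 := by
        by_contra he
        have h2le : 2 ≤ t ^ (a - 1) := by omega
        have : 4 ≤ N := by
          calc 4 = 2^2 := by norm_num
          _ ≤ n ^ 2 := Nat.pow_le_pow_left hn 2
          _ ≤ n ^ t ^ (a - 1) := Nat.pow_le_pow_right (by omega) h2le
        omega
      have hn2 : n = 2 := by
        rw [hNdef, he1, pow_one] at hN2'
        exact hN2'
      have ha1' : a = 1 := by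
        by_contra haa
        have : 2 ≤ a := by omega
        have : t ≤ t ^ (a - 1) := Nat.le_self_pow (by omega) t
        omega
      have hd2'' : d = 2 := by
        rw [ht3'] at hdt1
        have := Nat.le_of_dvd (by norm_num) hdt1
        omega
      exact hnk ⟨hn2, by rw [hka, ha1', hd2'', ht3']; norm_num⟩
    exact size_contradiction_d2 N t d hN2 ht hd2' htd ht3 hex hkey
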